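/- If Λ is a commutative ring finitely generated as a ℤ-algebra and 𝔪 is a maximal ideal of Λ, then there is a unique prime number p such that p ∈ 𝔪 (i.e. the image of p in Λ lies in 𝔪). -/

import Mathlib

/-- If `Λ` is a finitely generated `ℤ`-algebra and `𝔪` a maximal ideal, there is a
unique prime number `p` with `p ∈ 𝔪`. -/

theorem int_isJacobsonRing : IsJacobsonRing ℤ := by
  rw [isJacobsonRing_iff_prime_eq]
  intro P hP
  by_cases hbot : P = ⊥
  · subst hbot
    refine le_antisymm ?_ Ideal.le_jacobson
    intro x hx
    rw [Ideal.mem_jacobson_bot] at hx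
    have := hx x
    rw [Int.isUnit_iff] at this
    rcases this with h | h
    · have : x * x = 0 := by linarith
      rcases mul_self_eq_zero.mp this with rfl
      exact Ideal.zero_mem _
    · nlinarith [mul_self_nonneg x]
  · haveI := hP
    haveI : P.IsMaximal := IsPrime.to_maximal_ideal hbot
    exact Ideal.jacobson_eq_self_of_isMaximal

theorem stmt_4 (Λ : Type*) [CommRing Λ] [Algebra.FiniteType ℤ Λ]
    (𝔪 : Ideal Λ) [𝔪.IsMaximal] :
    ∃! p : ℕ, p.Prime ∧ (p : Λ) ∈ 𝔪 := by
  letI : Field (Λ ⧸ 𝔪) := Ideal.Quotient.field 𝔪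
  haveI : Algebra.FiniteType ℤ (Λ ⧸ 𝔪) :=
    Algebra.FiniteType.of_surjective (Ideal.Quotient.mkₐ ℤ 𝔪)
      Ideal.Quotient.mk_surjective
  haveI : IsJacobsonRing ℤ := int_isJacobsonRing
  haveI : Module.Finite ℤ (Λ ⧸ 𝔪) := finite_of_finite_type_of_isJacobsonRing ℤ _
  haveI : Algebra.IsIntegral ℤ (Λ ⧸ 𝔪) := Algebra.IsIntegral.of_finite ℤ _
  haveI : (⊥ : Ideal (Λ ⧸ 𝔪)).IsMaximal := Ideal.bot_isMaximal
  have hJmax : (Ideal.comap (algebraMap ℤ (Λ ⧸ 𝔪)) ⊥).IsMaximal :=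
    Ideal.isMaximal_comap_of_isIntegral_of_isMaximal (R := ℤ) ⊥
  set J : Ideal ℤ := Ideal.comap (algebraMap ℤ (Λ ⧸ 𝔪)) ⊥ with hJ
  -- membership characterization
  have hmem : ∀ n : ℤ, n ∈ J ↔ (n : Λ) ∈ 𝔪 := by
    intro n
    rw [hJ, Ideal.mem_comap, Ideal.mem_bot]
    have h1 : algebraMap ℤ (Λ ⧸ 𝔪) n = Ideal.Quotient.mk 𝔪 (n : Λ) := by
      simp [map_intCast]
    rw [h1, Ideal.Quotient.eq_zero_iff_mem]
  have hJne : J ≠ ⊥ := Ring.ne_bot_of_isMaximal_of_not_isField hJmax Int.not_isField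
  haveI : J.IsPrime := hJmax.isPrime
  have hg : Prime (Submodule.IsPrincipal.generator J) :=
    Submodule.IsPrincipal.prime_generator_of_isPrime J hJne
  set g := Submodule.IsPrincipal.generator J with hgdef
  refine ⟨g.natAbs, ⟨Int.prime_iff_natAbs_prime.mp hg, ?_⟩, ?_⟩
  · have : ((g.natAbs : ℤ)) ∈ J := by
      rw [Submodule.IsPrincipal.mem_iff_generator_dvd]
      exact Int.dvd_natAbs.mpr dvd_rfl
    have := (hmem _).mp this
    rwa [Int.cast_natCast] at this
  · rintro q ⟨hq, hqm⟩
    have : ((q : ℤ)) ∈ J := by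
      rw [hmem]
      push_cast
      exact hqm
    rw [Submodule.IsPrincipal.mem_iff_generator_dvd] at this
    have hdvd : g.natAbs ∣ q := by
      have := Int.natAbs_dvd_natAbs.mpr this
      simpa using this
    exact ((Nat.prime_dvd_prime_iff_eq (Int.prime_iff_natAbs_prime.mp hg) hq).mp hdvd).symm
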